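/- arXiv:1508.07044 — 8 statements merged into one kernel-verified Lean document; each statement's English description precedes it below -/
import Mathlib

section
/- The set Γ of sequences g ∈ (0,∞)^ℕ such that ∑_{n} |∏_{k≤n} g_k − 1| < ∞ is a subgroup of the multiplicative group (0,∞)^ℕ (with pointwise multiplication): it contains the constant sequence 1, is closed under pointwise multiplication, and is closed under pointwise inversion. -/
open Finset

/-- The set Γ of positive sequences whose partial products are absolutely
summably close to 1. -/
def Gamma : Set (ℕ → ℝ) :=
  {g | (∀ n, 0 < g n) ∧ Summable (fun n => |(∏ k ∈ Finset.range (n + 1), g k) - 1|)}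

private lemma tendsto_partial_one {g : ℕ → ℝ}
    (hs : Summable (fun n => |(∏ k ∈ Finset.range (n + 1), g k) - 1|)) :
    Filter.Tendsto (fun n => ∏ k ∈ Finset.range (n + 1), g k) Filter.atTop (nhds 1) := by
  have h0 := hs.tendsto_atTop_zero
  have h1 : Filter.Tendsto (fun n => (∏ k ∈ Finset.range (n + 1), g k) - 1)
      Filter.atTop (nhds 0) := by
    rwa [tendsto_zero_iff_abs_tendsto_zero]
  have := h1.add_const 1
  simpa using this

private lemma bdd_partial {g : ℕ → ℝ}
    (hs : Summable (fun n => |(∏ k ∈ Finset.range (n + 1), g k) - 1|)) :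
    ∃ C : ℝ, ∀ n, ∏ k ∈ Finset.range (n + 1), g k ≤ C := by
  obtain ⟨C, hC⟩ := (tendsto_partial_one hs).bddAbove_range
  exact ⟨C, fun n => hC ⟨n, rfl⟩⟩

theorem gamma_subgroup :
    ((fun _ => 1 : ℕ → ℝ) ∈ Gamma) ∧
    (∀ g h : ℕ → ℝ, g ∈ Gamma → h ∈ Gamma → (fun n => g n * h n) ∈ Gamma) ∧
    (∀ g : ℕ → ℝ, g ∈ Gamma → (fun n => (g n)⁻¹) ∈ Gamma) := by
  refine ⟨⟨fun n => one_pos, by simpa using summable_zero⟩, ?_, ?_⟩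
  · rintro g h ⟨hgpos, hgs⟩ ⟨hhpos, hhs⟩
    refine ⟨fun n => mul_pos (hgpos n) (hhpos n), ?_⟩
    obtain ⟨C, hC⟩ := bdd_partial hgs
    have hCpos : 0 < C := lt_of_lt_of_le (Finset.prod_pos fun k _ => hgpos k) (hC 0)
    have key : ∀ n, |(∏ k ∈ Finset.range (n + 1), g k * h k) - 1| ≤
        C * |(∏ k ∈ Finset.range (n + 1), h k) - 1| +
        |(∏ k ∈ Finset.range (n + 1), g k) - 1| := by
      intro n
      set P := ∏ k ∈ Finset.range (n + 1), g k with hP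
      set Q := ∏ k ∈ Finset.range (n + 1), h k with hQ
      have hprod : ∏ k ∈ Finset.range (n + 1), g k * h k = P * Q :=
        Finset.prod_mul_distrib
      rw [hprod]
      have : P * Q - 1 = P * (Q - 1) + (P - 1) := by ring
      rw [this]
      calc |P * (Q - 1) + (P - 1)| ≤ |P * (Q - 1)| + |P - 1| := abs_add_le _ _
        _ ≤ C * |Q - 1| + |P - 1| := by
            rw [abs_mul]
            have hPpos : 0 < P := Finset.prod_pos fun k _ => hgpos k
            gcongr
            · rw [abs_of_pos hPpos]; exact hC n
    refine Summable.of_nonneg_of_le (fun n => abs_nonneg _) key ?_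
    exact ((hhs.mul_left C).add hgs)
  · rintro g ⟨hgpos, hgs⟩
    refine ⟨fun n => inv_pos.mpr (hgpos n), ?_⟩
    have hPpos : ∀ n, 0 < ∏ k ∈ Finset.range (n + 1), g k :=
      fun n => Finset.prod_pos fun k _ => hgpos k
    have hinv : Filter.Tendsto (fun n => (∏ k ∈ Finset.range (n + 1), g k)⁻¹)
        Filter.atTop (nhds 1) := by
      have := (tendsto_partial_one hgs).inv₀ one_ne_zero
      simpa using this
    obtain ⟨C, hC⟩ := hinv.bddAbove_range
    have hC' : ∀ n, (∏ k ∈ Finset.range (n + 1), g k)⁻¹ ≤ C := fun n => hC ⟨n, rfl⟩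
    have key : ∀ n, |(∏ k ∈ Finset.range (n + 1), (g k)⁻¹) - 1| ≤
        C * |(∏ k ∈ Finset.range (n + 1), g k) - 1| := by
      intro n
      set P := ∏ k ∈ Finset.range (n + 1), g k with hP
      have hprod : ∏ k ∈ Finset.range (n + 1), (g k)⁻¹ = P⁻¹ :=
        Finset.prod_inv_distrib _
      rw [hprod]
      have hPn := hPpos n
      have : P⁻¹ - 1 = P⁻¹ * (1 - P) := by rw [mul_sub, mul_one, inv_mul_cancel₀ (show P ≠ 0 from hPn.ne')]
      rw [this, abs_mul, abs_sub_comm]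
      gcongr
      · rw [abs_of_pos (inv_pos.mpr hPn)]; exact hC' n
    exact Summable.of_nonneg_of_le (fun n => abs_nonneg _) key (hgs.mul_left C)
end

section
/- If g, h ∈ Γ, then ∑_n |∏_{k≤n} g_k h_k − 1| ≤ ∑_{n<n₀} |∏_{k≤n} g_k h_k − 1| + (3/2)·∑_n |∏_{k≤n} h_k − 1| + ∑_n |∏_{k≤n} g_k − 1| for any n₀ such that |∏_{k≤n} g_k − 1| ≤ 1/2 for all n ≥ n₀; in particular the pointwise product gh belongs to Γ. -/
open Finset

set_option maxHeartbeats 1000000 in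
theorem gamma_mul_estimate (g h : ℕ → ℝ)
    (hgpos : ∀ n, 0 < g n) (hhpos : ∀ n, 0 < h n)
    (hg : Summable (fun n => |(∏ k ∈ Finset.range (n + 1), g k) - 1|))
    (hh : Summable (fun n => |(∏ k ∈ Finset.range (n + 1), h k) - 1|))
    (n₀ : ℕ)
    (hn₀ : ∀ n ≥ n₀, |(∏ k ∈ Finset.range (n + 1), g k) - 1| ≤ 1 / 2) :
    Summable (fun n => |(∏ k ∈ Finset.range (n + 1), g k * h k) - 1|) ∧
    (∑' n, |(∏ k ∈ Finset.range (n + 1), g k * h k) - 1|) ≤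
      (∑ n ∈ Finset.range n₀, |(∏ k ∈ Finset.range (n + 1), g k * h k) - 1|) +
      (3 / 2) * (∑' n, |(∏ k ∈ Finset.range (n + 1), h k) - 1|) +
      (∑' n, |(∏ k ∈ Finset.range (n + 1), g k) - 1|) := by
  set G : ℕ → ℝ := fun n => ∏ k ∈ Finset.range (n + 1), g k with hG
  set H : ℕ → ℝ := fun n => ∏ k ∈ Finset.range (n + 1), h k with hH
  have hprod : ∀ n, (∏ k ∈ Finset.range (n + 1), g k * h k) = G n * H n := by
    intro n; simp [hG, hH, Finset.prod_mul_distrib]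
  have key : ∀ n ≥ n₀, |G n * H n - 1| ≤ (3/2) * |H n - 1| + |G n - 1| := by
    intro n hn
    have hGb : |G n| ≤ 3/2 := by
      have := hn₀ n hn
      calc |G n| = |(G n - 1) + 1| := by ring_nf
        _ ≤ |G n - 1| + |(1:ℝ)| := abs_add_le _ _
        _ ≤ 1/2 + 1 := by simp; linarith
        _ = 3/2 := by norm_num
    calc |G n * H n - 1| = |G n * (H n - 1) + (G n - 1)| := by ring_nf
      _ ≤ |G n * (H n - 1)| + |G n - 1| := abs_add_le _ _
      _ = |G n| * |H n - 1| + |G n - 1| := by rw [abs_mul]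
      _ ≤ (3/2) * |H n - 1| + |G n - 1| := by
          have := abs_nonneg (H n - 1)
          nlinarith
  set b : ℕ → ℝ := fun n => (3/2) * |H n - 1| + |G n - 1| with hb
  have hbsum : Summable b := (hh.mul_left _).add hg
  have hfsum : Summable (fun n => |G n * H n - 1|) := by
    rw [← summable_nat_add_iff n₀]
    exact Summable.of_nonneg_of_le (fun n => abs_nonneg _)
      (fun n => key (n + n₀) (Nat.le_add_left _ _))
      ((summable_nat_add_iff n₀).2 hbsum)
  have hfsum' : Summable (fun n => |(∏ k ∈ Finset.range (n + 1), g k * h k) - 1|) := by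
    simpa only [hprod] using hfsum
  refine ⟨hfsum', ?_⟩
  simp only [hprod]
  rw [← Summable.sum_add_tsum_nat_add n₀ hfsum]
  have htail : (∑' n, |G (n + n₀) * H (n + n₀) - 1|) ≤ ∑' n, b (n + n₀) := by
    apply Summable.tsum_le_tsum (fun n => key (n + n₀) (Nat.le_add_left _ _))
      ((summable_nat_add_iff n₀).2 hfsum) ((summable_nat_add_iff n₀).2 hbsum)
  have htail2 : (∑' n, b (n + n₀)) ≤ ∑' n, b n := by
    rw [← Summable.sum_add_tsum_nat_add n₀ hbsum]
    have : 0 ≤ ∑ i ∈ Finset.range n₀, b i :=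
      Finset.sum_nonneg fun i _ => by positivity
    linarith
  have hbts : (∑' n, b n) = (3/2) * (∑' n, |H n - 1|) + ∑' n, |G n - 1| := by
    rw [Summable.tsum_add (hh.mul_left _) hg, tsum_mul_left]
  have hHts : (∑' n, |H n - 1|) = ∑' n, |(∏ k ∈ Finset.range (n + 1), h k) - 1| := rfl
  have hGts : (∑' n, |G n - 1|) = ∑' n, |(∏ k ∈ Finset.range (n + 1), g k) - 1| := rfl
  linarith [htail, htail2, hbts.le]
end

section
/- The map Φ sending a sequence a ∈ (0,∞)^ℕ to the sequence ((∏_{k≤n} a_k) − 1)_n restricts to an isometry from (Γ, d_Γ) onto a subset of ℓ¹ with the ℓ¹-metric; moreover its image Φ[Γ] equals the set of b ∈ ℓ¹ with b_n > −1 for all n, which is an open (in particular G_δ) subset of ℓ¹. -/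
open Finset
open scoped ENNReal

noncomputable def dGamma (g h : ℕ → ℝ) : ℝ :=
  ∑' n, |(∏ k ∈ Finset.range (n + 1), g k) - (∏ k ∈ Finset.range (n + 1), h k)|

lemma gamma_mem (g : Gamma) :
    Memℓp (fun n => (∏ k ∈ Finset.range (n + 1), (g : ℕ → ℝ) k) - 1) (1 : ℝ≥0∞) := by
  apply memℓp_gen
  simpa using g.2.2

lemma exists_pos_lb (f : ℕ → ℝ) (hf : ∀ n, 0 < f n)
    (hlim : Filter.Tendsto f Filter.atTop (nhds 1)) : ∃ δ > 0, ∀ n, δ ≤ f n := by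
  have h := (hlim.eventually (eventually_gt_nhds (by norm_num : (1/2:ℝ) < 1))).exists_forall_of_atTop
  obtain ⟨N, hN⟩ := h
  refine ⟨min (1/2) ((Finset.range (N+1)).inf' ⟨0, by simp⟩ f), ?_, ?_⟩
  · apply lt_min (by norm_num)
    exact (Finset.lt_inf'_iff _).2 fun n _ => hf n
  · intro n
    rcases le_or_gt n N with h' | h'
    · exact le_trans (min_le_right _ _)
        (Finset.inf'_le _ (by simp [Nat.lt_succ_iff.mpr h']))
    · exact le_trans (min_le_left _ _) (hN n h'.le).le

theorem gamma_isometric_to_ell1 :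
    ∃ Φ : Gamma → lp (fun _ : ℕ => ℝ) 1,
      (∀ g : Gamma, ∀ n : ℕ, (Φ g : ℕ → ℝ) n = (∏ k ∈ Finset.range (n + 1), (g : ℕ → ℝ) k) - 1) ∧
      (∀ g h : Gamma, dist (Φ g) (Φ h) = dGamma (g : ℕ → ℝ) (h : ℕ → ℝ)) ∧
      Function.Injective Φ ∧
      (Set.range Φ = {b : lp (fun _ : ℕ => ℝ) 1 | ∀ n, (-1 : ℝ) < (b : ℕ → ℝ) n}) ∧
      IsOpen {b : lp (fun _ : ℕ => ℝ) 1 | ∀ n, (-1 : ℝ) < (b : ℕ → ℝ) n} := by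
  refine ⟨fun g => ⟨fun n => (∏ k ∈ Finset.range (n + 1), (g : ℕ → ℝ) k) - 1, gamma_mem g⟩,
    fun g n => rfl, ?_, ?_, ?_, ?_⟩
  · -- distance
    intro g h
    rw [dist_eq_norm, lp.norm_eq_tsum_rpow (by norm_num) _]
    simp only [ENNReal.toReal_one, Real.rpow_one]
    rw [show (1:ℝ)/1 = 1 by norm_num, Real.rpow_one]
    unfold dGamma
    apply tsum_congr
    intro n
    rw [show (((⟨fun n => (∏ k ∈ Finset.range (n + 1), (g : ℕ → ℝ) k) - 1, gamma_mem g⟩ -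
        ⟨fun n => (∏ k ∈ Finset.range (n + 1), (h : ℕ → ℝ) k) - 1, gamma_mem h⟩ :
        lp (fun _ : ℕ => ℝ) 1)) : ℕ → ℝ) n =
        ((∏ k ∈ Finset.range (n + 1), (g : ℕ → ℝ) k) - 1) -
        ((∏ k ∈ Finset.range (n + 1), (h : ℕ → ℝ) k) - 1) from rfl]
    rw [Real.norm_eq_abs, sub_sub_sub_cancel_right]
  · -- injective
    intro g h hgh
    have hco : ∀ n, (∏ k ∈ Finset.range (n + 1), (g : ℕ → ℝ) k)
        = ∏ k ∈ Finset.range (n + 1), (h : ℕ → ℝ) k := by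
      intro n
      have := congrArg (fun f : lp (fun _ : ℕ => ℝ) 1 => (f : ℕ → ℝ) n) hgh
      simpa using sub_left_injective this
    ext n
    induction n with
    | zero => simpa using hco 0
    | succ m ih =>
      have h2 : (∏ k ∈ Finset.range (m+1), (g : ℕ → ℝ) k) * (g : ℕ → ℝ) (m+1)
          = (∏ k ∈ Finset.range (m+1), (h : ℕ → ℝ) k) * (h : ℕ → ℝ) (m+1) := by
        rw [← Finset.prod_range_succ, ← Finset.prod_range_succ]; exact hco (m+1)
      rw [← hco m] at h2
      exact mul_left_cancel₀ (Finset.prod_ne_zero_iff.2 fun k _ => (g.2.1 k).ne') h2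
  · -- range
    ext b
    constructor
    · rintro ⟨g, rfl⟩ n
      have : (0:ℝ) < ∏ k ∈ Finset.range (n + 1), (g : ℕ → ℝ) k :=
        Finset.prod_pos fun k _ => g.2.1 k
      show (-1:ℝ) < (∏ k ∈ Finset.range (n + 1), (g : ℕ → ℝ) k) - 1
      linarith
    · intro hb
      set P : ℕ → ℝ := fun n => (b : ℕ → ℝ) n + 1 with hP
      have hPpos : ∀ n, 0 < P n := fun n => by have := hb n; simp only [hP]; linarith
      set g : ℕ → ℝ := fun n => if n = 0 then P 0 else P n / P (n - 1) with hg
      have hgpos : ∀ n, 0 < g n := by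
        intro n
        simp only [hg]
        split
        · exact hPpos 0
        · exact div_pos (hPpos n) (hPpos (n-1))
      have hprod : ∀ n, (∏ k ∈ Finset.range (n + 1), g k) = P n := by
        intro n
        induction n with
        | zero => simp [hg]
        | succ m ih =>
          rw [Finset.prod_range_succ, ih]
          simp only [hg]
          rw [if_neg (Nat.succ_ne_zero m)]
          simp only [Nat.add_sub_cancel]
          rw [mul_comm, div_mul_cancel₀ _ (hPpos m).ne']
      have hsum : Summable fun n => |(∏ k ∈ Finset.range (n + 1), g k) - 1| := by
        have : Summable fun n => |(b : ℕ → ℝ) n| := by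
          have h1 : Memℓp (b : ℕ → ℝ) 1 := lp.memℓp b
          have := (memℓp_gen_iff (by norm_num)).1 h1
          simpa using this
        apply this.congr
        intro n
        simp [hprod, hP]
      refine ⟨⟨g, hgpos, hsum⟩, ?_⟩
      apply Subtype.ext
      funext n
      simp [hprod, hP]
  · -- open
    rw [Metric.isOpen_iff]
    intro b hb
    have hpos : ∀ n, 0 < (b : ℕ → ℝ) n + 1 := fun n => by have := hb n; linarith
    have hlim : Filter.Tendsto (fun n => (b : ℕ → ℝ) n + 1) Filter.atTop (nhds 1) := by
      have hsb : Summable (b : ℕ → ℝ) := by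
        have h1 := (memℓp_gen_iff (p := (1:ℝ≥0∞)) (by norm_num)).1 (lp.memℓp b)
        exact (Summable.of_abs (by simpa using h1))
      have := hsb.tendsto_atTop_zero
      simpa using this.add_const 1
    obtain ⟨δ, hδ, hδle⟩ := exists_pos_lb _ hpos hlim
    refine ⟨δ, hδ, ?_⟩
    intro c hc n
    have h1 : |(c : ℕ → ℝ) n - (b : ℕ → ℝ) n| ≤ ‖c - b‖ := by
      have := lp.norm_apply_le_norm (p := (1:ℝ≥0∞)) one_ne_zero (c - b) n
      simpa [Real.norm_eq_abs] using this
    have h2 : ‖c - b‖ < δ := by rwa [← dist_eq_norm, ← Metric.mem_ball]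
    have := hδle n
    have := abs_lt.1 (h1.trans_lt h2)
    linarith
end

section
/- The relation E on (0,1)^ℕ defined by s E s′ iff ∑_n |∏_{i≤n} (s_i/s′_i) − 1| < ∞ is an equivalence relation. -/
open Finset Filter Asymptotics

private lemma prodtend {P : ℕ → ℝ} (h : Summable (fun n => |P n - 1|)) :
    Tendsto P atTop (nhds 1) := by
  have h0 : Tendsto (fun n => |P n - 1|) atTop (nhds 0) := h.tendsto_atTop_zero
  have : Tendsto (fun n => P n - 1) atTop (nhds 0) := by
    rwa [tendsto_zero_iff_abs_tendsto_zero]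
  have := this.add_const 1
  simpa using this

theorem E_equivalence :
    Equivalence (fun s s' : {s : ℕ → ℝ // ∀ n, s n ∈ Set.Ioo (0 : ℝ) 1} =>
      Summable (fun n => |(∏ i ∈ Finset.range (n + 1), (s : ℕ → ℝ) i / (s' : ℕ → ℝ) i) - 1|)) := by
  constructor
  · intro s
    have : ∀ n, |(∏ i ∈ Finset.range (n + 1), (s : ℕ → ℝ) i / (s : ℕ → ℝ) i) - 1| = 0 := by
      intro n
      rw [Finset.prod_congr rfl (fun i _ => div_self (ne_of_gt (s.2 i).1)), Finset.prod_const_one]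
      simp
    rw [show (fun n => |(∏ i ∈ Finset.range (n + 1), (s : ℕ → ℝ) i / (s : ℕ → ℝ) i) - 1|) = fun _ => (0:ℝ) from funext this]
    exact summable_zero
  · intro s t h
    set P := fun n => ∏ i ∈ Finset.range (n + 1), (s : ℕ → ℝ) i / (t : ℕ → ℝ) i with hP
    have hPpos : ∀ n, 0 < P n := fun n =>
      Finset.prod_pos (fun i _ => div_pos (s.2 i).1 (t.2 i).1)
    have hQ : ∀ n, (∏ i ∈ Finset.range (n + 1), (t : ℕ → ℝ) i / (s : ℕ → ℝ) i) = (P n)⁻¹ := by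
      intro n
      rw [hP, ← Finset.prod_inv_distrib]
      exact Finset.prod_congr rfl (fun i _ => by
        rw [inv_div])
    have htend := prodtend h
    have hev : ∀ᶠ n in atTop, |(P n)⁻¹ - 1| ≤ 2 * |P n - 1| := by
      have : ∀ᶠ n in atTop, P n > 1/2 := htend.eventually (eventually_gt_nhds (by norm_num))
      filter_upwards [this] with n hn
      have hne : P n ≠ 0 := (hPpos n).ne'
      have : (P n)⁻¹ - 1 = (1 - P n) / P n := by field_simp
      rw [this, abs_div, abs_sub_comm, abs_of_pos (hPpos n)]
      rw [div_le_iff₀ (hPpos n)]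
      nlinarith [abs_nonneg (P n - 1)]
    have hO : (fun n => |(P n)⁻¹ - 1|) =O[atTop] (fun n => |P n - 1|) := by
      apply IsBigO.of_bound 2
      filter_upwards [hev] with n hn
      simpa [abs_abs] using hn
    have := summable_of_isBigO_nat h hO
    simpa [hQ] using this
  · intro s t u h1 h2
    set P := fun n => ∏ i ∈ Finset.range (n + 1), (s : ℕ → ℝ) i / (t : ℕ → ℝ) i with hP
    set Q := fun n => ∏ i ∈ Finset.range (n + 1), (t : ℕ → ℝ) i / (u : ℕ → ℝ) i with hQ
    have hR : ∀ n, (∏ i ∈ Finset.range (n + 1), (s : ℕ → ℝ) i / (u : ℕ → ℝ) i) = P n * Q n := by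
      intro n
      rw [hP, hQ, ← Finset.prod_mul_distrib]
      refine Finset.prod_congr rfl (fun i _ => ?_)
      rw [div_mul_div_comm]
      rw [mul_comm ((s:ℕ→ℝ) i) _, mul_div_mul_left _ _ (t.2 i).1.ne']
    have htP := prodtend h1
    have hev : ∀ᶠ n in atTop, |P n * Q n - 1| ≤ 2 * (|Q n - 1| + |P n - 1|) := by
      have : ∀ᶠ n in atTop, P n < 2 := htP.eventually (eventually_lt_nhds (by norm_num))
      filter_upwards [this] with n hn
      have : P n * Q n - 1 = P n * (Q n - 1) + (P n - 1) := by ring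
      rw [this]
      calc |P n * (Q n - 1) + (P n - 1)| ≤ |P n * (Q n - 1)| + |P n - 1| := abs_add_le _ _
        _ = |P n| * |Q n - 1| + |P n - 1| := by rw [abs_mul]
        _ ≤ 2 * |Q n - 1| + |P n - 1| := by
            have hPpos : 0 < P n := Finset.prod_pos (fun i _ => div_pos (s.2 i).1 (t.2 i).1)
            have : |P n| ≤ 2 := by rw [abs_of_pos hPpos]; linarith
            nlinarith [abs_nonneg (Q n - 1)]
        _ ≤ 2 * (|Q n - 1| + |P n - 1|) := by nlinarith [abs_nonneg (P n - 1)]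
    have hsum : Summable (fun n => |Q n - 1| + |P n - 1|) := h2.add h1
    have hO : (fun n => |P n * Q n - 1|) =O[atTop] (fun n => |Q n - 1| + |P n - 1|) := by
      apply IsBigO.of_bound 2
      filter_upwards [hev] with n hn
      have hnn : 0 ≤ |Q n - 1| + |P n - 1| := by positivity
      simpa [abs_abs, Real.norm_eq_abs, abs_of_nonneg hnn] using hn
    have := summable_of_isBigO_nat hsum hO
    simpa [hR] using this
end

section
/- Every equivalence class of the relation F on (0,1)^ℕ, defined by s F s′ iff sup_n |∑_{k<n} (∏_{i≤k} s_i − ∏_{i≤k} s′_i)| < ∞, is a meager subset of (0,1)^ℕ with the product topology. -/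
open Finset Filter Topology

namespace FClassesMeagreAux

/-- The partial product `∏_{i ≤ k} t i`. -/
noncomputable def P (t : ℕ → Set.Ioo (0 : ℝ) 1) (k : ℕ) : ℝ :=
  ∏ i ∈ Finset.range (k + 1), (t i : ℝ)

lemma P_pos (t : ℕ → Set.Ioo (0 : ℝ) 1) (k : ℕ) : 0 < P t k :=
  Finset.prod_pos fun i _ => (t i).2.1

lemma P_antitone (t : ℕ → Set.Ioo (0 : ℝ) 1) : Antitone (P t) := by
  apply antitone_nat_of_succ_le
  intro k
  rw [P, Finset.prod_range_succ]
  exact mul_le_of_le_one_right (P_pos t k).le (t (k + 1)).2.2.le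

lemma P_bddBelow (t : ℕ → Set.Ioo (0 : ℝ) 1) : BddBelow (Set.range (P t)) := by
  refine ⟨0, ?_⟩
  rintro x ⟨k, rfl⟩
  exact (P_pos t k).le

lemma P_tendsto (t : ℕ → Set.Ioo (0 : ℝ) 1) :
    Tendsto (P t) atTop (𝓝 (⨅ k, P t k)) :=
  tendsto_atTop_ciInf (P_antitone t) (P_bddBelow t)

/-- Weierstrass product inequality. -/
lemma one_sub_sum_le_prod (I : Finset ℕ) (x : ℕ → ℝ) (h0 : ∀ i ∈ I, 0 ≤ x i)
    (h1 : ∀ i ∈ I, x i ≤ 1) :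
    1 - ∑ i ∈ I, x i ≤ ∏ i ∈ I, (1 - x i) := by
  induction I using Finset.cons_induction with
  | empty => simp
  | cons a I ha ih =>
    rw [Finset.sum_cons, Finset.prod_cons]
    have h0a : 0 ≤ x a := h0 a (Finset.mem_cons_self a I)
    have h1a : x a ≤ 1 := h1 a (Finset.mem_cons_self a I)
    have ih' : 1 - ∑ i ∈ I, x i ≤ ∏ i ∈ I, (1 - x i) :=
      ih (fun i hi => h0 i (Finset.mem_cons_of_mem hi))
        (fun i hi => h1 i (Finset.mem_cons_of_mem hi))
    have hS : 0 ≤ ∑ i ∈ I, x i :=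
      Finset.sum_nonneg fun i hi => h0 i (Finset.mem_cons_of_mem hi)
    nlinarith [ih', hS, h0a, h1a]

lemma geom_sum_le_two (n : ℕ) : ∑ i ∈ Finset.range n, ((2 : ℝ)⁻¹) ^ i ≤ 2 := by
  have h : ∑ i ∈ Finset.range n, ((2 : ℝ)⁻¹) ^ i = 2 - 2 * (2 : ℝ)⁻¹ ^ n := by
    induction n with
    | zero => simp
    | succ n ih => rw [Finset.sum_range_succ, ih]; ring
  rw [h]
  have : (0 : ℝ) < (2 : ℝ)⁻¹ ^ n := by positivity
  linarith

lemma geom_Ico_le (c N k : ℕ) :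
    ∑ i ∈ Finset.Ico N (k + 1), ((2 : ℝ)⁻¹) ^ (i + 1 + c) ≤ ((2 : ℝ)⁻¹) ^ (N + c) := by
  rw [Finset.sum_Ico_eq_sum_range]
  have h : ∀ i : ℕ, ((2 : ℝ)⁻¹) ^ (N + i + 1 + c) = ((2 : ℝ)⁻¹) ^ (N + 1 + c) * ((2 : ℝ)⁻¹) ^ i := by
    intro i
    rw [← pow_add]
    ring_nf
  calc ∑ i ∈ Finset.range (k + 1 - N), ((2 : ℝ)⁻¹) ^ (N + i + 1 + c)
      = ((2 : ℝ)⁻¹) ^ (N + 1 + c) * ∑ i ∈ Finset.range (k + 1 - N), ((2 : ℝ)⁻¹) ^ i := by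
        rw [Finset.mul_sum]; exact Finset.sum_congr rfl fun i _ => h i
    _ ≤ ((2 : ℝ)⁻¹) ^ (N + 1 + c) * 2 := by
        have : (0 : ℝ) ≤ ((2 : ℝ)⁻¹) ^ (N + 1 + c) := by positivity
        exact mul_le_mul_of_nonneg_left (geom_sum_le_two _) this
    _ = ((2 : ℝ)⁻¹) ^ (N + c) := by
        rw [show N + 1 + c = (N + c) + 1 by ring, pow_succ]
        ring

/-- If `f` tends to a nonzero limit, its partial sums are unbounded. -/
lemma not_bounded {f : ℕ → ℝ} {d : ℝ} (hd : d ≠ 0) (hf : Tendsto f atTop (𝓝 d)) (M : ℝ)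
    (hM : ∀ n, |∑ k ∈ Finset.range n, f k| ≤ M) : False := by
  have hd2 : 0 < |d| / 2 := by positivity
  obtain ⟨n0, hn0⟩ := Metric.tendsto_atTop.mp hf (|d| / 2) hd2
  set C := ∑ k ∈ Finset.range n0, |f k - d| with hC
  have key : ∀ n, n0 ≤ n → (n : ℝ) * (|d| / 2) ≤ M + C := by
    intro n hn
    have h1 : |∑ k ∈ Finset.range n, (f k - d)| ≤ C + (n : ℝ) * (|d| / 2) := by
      calc |∑ k ∈ Finset.range n, (f k - d)|
          ≤ ∑ k ∈ Finset.range n, |f k - d| := Finset.abs_sum_le_sum_abs _ _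
        _ = C + ∑ k ∈ Finset.Ico n0 n, |f k - d| := by
            rw [hC, Finset.sum_range_add_sum_Ico _ hn]
        _ ≤ C + ∑ k ∈ Finset.Ico n0 n, (|d| / 2) := by
            gcongr with k hk
            have := hn0 k (Finset.mem_Ico.mp hk).1
            rw [Real.dist_eq] at this
            exact this.le
        _ = C + ((n - n0 : ℕ) : ℝ) * (|d| / 2) := by
            rw [Finset.sum_const, Nat.card_Ico, nsmul_eq_mul]
        _ ≤ C + (n : ℝ) * (|d| / 2) := by
            gcongr
            exact_mod_cast Nat.sub_le n n0
    have h2 : (n : ℝ) * d = ∑ k ∈ Finset.range n, f k - ∑ k ∈ Finset.range n, (f k - d) := by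
      rw [Finset.sum_sub_distrib, Finset.sum_const, Finset.card_range, nsmul_eq_mul]
      ring
    have h3 : (n : ℝ) * |d| ≤ M + (C + (n : ℝ) * (|d| / 2)) := by
      calc (n : ℝ) * |d| = |(n : ℝ) * d| := by rw [abs_mul, Nat.abs_cast]
        _ ≤ |∑ k ∈ Finset.range n, f k| + |∑ k ∈ Finset.range n, (f k - d)| := by
            rw [h2]; exact abs_sub _ _
        _ ≤ M + (C + (n : ℝ) * (|d| / 2)) := add_le_add (hM n) h1
    have h4 : (n : ℝ) * |d| = (n : ℝ) * (|d| / 2) + (n : ℝ) * (|d| / 2) := by ring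
    linarith
  obtain ⟨n, hn⟩ := exists_nat_gt (max (n0 : ℝ) ((M + C) / (|d| / 2)))
  have hn1 : n0 ≤ n := by exact_mod_cast ((le_max_left _ _).trans hn.le)
  have h5 := key n hn1
  have h6 : (M + C) / (|d| / 2) < (n : ℝ) := lt_of_le_of_lt (le_max_right _ _) hn
  have := (div_lt_iff₀ hd2).mp h6
  linarith

/-- The modified sequence: agrees with `t` below `N`, equals `1 - 2^{-(i+1+c)}` above. -/
noncomputable def tm (t : ℕ → Set.Ioo (0 : ℝ) 1) (N c : ℕ) (i : ℕ) : Set.Ioo (0 : ℝ) 1 :=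
  if i < N then t i else
    ⟨1 - (2 : ℝ)⁻¹ ^ (i + 1 + c), by
      have h1 : (0 : ℝ) < (2 : ℝ)⁻¹ ^ (i + 1 + c) := by positivity
      have h2 : (2 : ℝ)⁻¹ ^ (i + 1 + c) < 1 :=
        pow_lt_one₀ (by norm_num) (by norm_num) (by omega)
      exact ⟨by linarith, by linarith⟩⟩

lemma P_tm_of_ge (t : ℕ → Set.Ioo (0 : ℝ) 1) (N c k : ℕ) (h : N ≤ k + 1) :
    P (tm t N c) k =
      (∏ i ∈ Finset.range N, (t i : ℝ)) *
        ∏ i ∈ Finset.Ico N (k + 1), (1 - (2 : ℝ)⁻¹ ^ (i + 1 + c)) := by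
  rw [P, ← Finset.prod_range_mul_prod_Ico _ h]
  congr 1
  · exact Finset.prod_congr rfl fun i hi => by
      rw [tm, if_pos (Finset.mem_range.mp hi)]
  · exact Finset.prod_congr rfl fun i hi => by
      rw [tm, if_neg (not_lt.mpr (Finset.mem_Ico.mp hi).1)]

lemma P_tm_lb (t : ℕ → Set.Ioo (0 : ℝ) 1) (N c k : ℕ) :
    (∏ i ∈ Finset.range N, (t i : ℝ)) * (1 - (2 : ℝ)⁻¹ ^ (N + c)) ≤ P (tm t N c) k := by
  have hPN : 0 < ∏ i ∈ Finset.range N, (t i : ℝ) :=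
    Finset.prod_pos fun i _ => (t i).2.1
  have hx : (0 : ℝ) ≤ (2 : ℝ)⁻¹ ^ (N + c) := by positivity
  by_cases h : N ≤ k + 1
  · rw [P_tm_of_ge t N c k h]
    apply mul_le_mul_of_nonneg_left _ hPN.le
    refine le_trans ?_ (one_sub_sum_le_prod _ _ (fun i _ => by positivity)
      (fun i _ => (pow_le_one₀ (by norm_num) (by norm_num))))
    have := geom_Ico_le c N k
    linarith
  · push_neg at h
    have hk : k < N := by omega
    have h1 : P (tm t N c) k = P t k := by
      rw [P, P]
      exact Finset.prod_congr rfl fun i hi => by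
        rw [tm, if_pos (lt_of_lt_of_le (Finset.mem_range.mp hi) (by omega))]
    rw [h1]
    have h2 : (∏ i ∈ Finset.range N, (t i : ℝ)) ≤ P t k := by
      rw [P, ← Finset.prod_range_mul_prod_Ico (fun i => ((t i : ℝ))) (show k + 1 ≤ N by omega)]
      have hpos : 0 < ∏ i ∈ Finset.range (k + 1), (t i : ℝ) :=
        Finset.prod_pos fun i _ => (t i).2.1
      have hle1 : ∏ i ∈ Finset.Ico (k + 1) N, (t i : ℝ) ≤ 1 :=
        Finset.prod_le_one (fun i _ => (t i).2.1.le) (fun i _ => (t i).2.2.le)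
      exact mul_le_of_le_one_right hpos.le hle1
    have h3 : (∏ i ∈ Finset.range N, (t i : ℝ)) * (1 - (2 : ℝ)⁻¹ ^ (N + c)) ≤
        ∏ i ∈ Finset.range N, (t i : ℝ) :=
      mul_le_of_le_one_right hPN.le (by linarith)
    linarith

/-- The two candidate limits are distinct: `⨅ P (tm t N 0) < ⨅ P (tm t N 1)`. -/
lemma iInf_tm_lt (t : ℕ → Set.Ioo (0 : ℝ) 1) (N : ℕ) :
    (⨅ k, P (tm t N 0) k) < ⨅ k, P (tm t N 1) k := by
  set PN := ∏ i ∈ Finset.range N, (t i : ℝ) with hPNdef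
  have hPN : 0 < PN := Finset.prod_pos fun i _ => (t i).2.1
  have hr1 : (2 : ℝ)⁻¹ ^ (N + 1) < 1 := pow_lt_one₀ (by norm_num) (by norm_num) (by omega)
  have hr1' : (0 : ℝ) < (2 : ℝ)⁻¹ ^ (N + 1) := by positivity
  have hr2 : (2 : ℝ)⁻¹ ^ (N + 2) < 1 := pow_lt_one₀ (by norm_num) (by norm_num) (by omega)
  have hr2' : (0 : ℝ) < (2 : ℝ)⁻¹ ^ (N + 2) := by positivity
  have hub : (⨅ k, P (tm t N 0) k) ≤
      PN * ((1 - (2 : ℝ)⁻¹ ^ (N + 1)) * (1 - (2 : ℝ)⁻¹ ^ (N + 2))) := by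
    have h1 : P (tm t N 0) (N + 1) =
        PN * ((1 - (2 : ℝ)⁻¹ ^ (N + 1)) * (1 - (2 : ℝ)⁻¹ ^ (N + 2))) := by
      rw [P_tm_of_ge t N 0 (N + 1) (by omega)]
      congr 1
      rw [show N + 1 + 1 = (N + 1) + 1 from rfl, Finset.prod_Ico_succ_top (by omega),
        Nat.Ico_succ_singleton, Finset.prod_singleton]
    calc (⨅ k, P (tm t N 0) k) ≤ P (tm t N 0) (N + 1) :=
          ciInf_le (P_bddBelow _) (N + 1)
      _ = _ := h1
  have hlb : PN * (1 - (2 : ℝ)⁻¹ ^ (N + 1)) ≤ ⨅ k, P (tm t N 1) k :=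
    le_ciInf fun k => P_tm_lb t N 1 k
  have hmid : PN * ((1 - (2 : ℝ)⁻¹ ^ (N + 1)) * (1 - (2 : ℝ)⁻¹ ^ (N + 2))) <
      PN * (1 - (2 : ℝ)⁻¹ ^ (N + 1)) := by
    have hpos : 0 < PN * (1 - (2 : ℝ)⁻¹ ^ (N + 1)) := by
      apply mul_pos hPN; linarith
    calc PN * ((1 - (2 : ℝ)⁻¹ ^ (N + 1)) * (1 - (2 : ℝ)⁻¹ ^ (N + 2)))
        = PN * (1 - (2 : ℝ)⁻¹ ^ (N + 1)) * (1 - (2 : ℝ)⁻¹ ^ (N + 2)) := by ring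
      _ < PN * (1 - (2 : ℝ)⁻¹ ^ (N + 1)) := by
          apply mul_lt_of_lt_one_right hpos
          linarith
  linarith

lemma interior_K_empty (s : ℕ → Set.Ioo (0 : ℝ) 1) (m : ℝ) :
    interior {t : ℕ → Set.Ioo (0 : ℝ) 1 |
      ∀ n, |∑ k ∈ Finset.range n, (P s k - P t k)| ≤ m} = ∅ := by
  rw [Set.eq_empty_iff_forall_notMem]
  intro t ht
  obtain ⟨I, u, hu, hsub⟩ := isOpen_pi_iff.mp isOpen_interior t ht
  set N := I.sup id + 1 with hN
  set σ := ⨅ k, P s k with hσ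
  -- choose c so that the limit of P (tm t N c) differs from σ
  have hne : (⨅ k, P (tm t N 0) k) ≠ (⨅ k, P (tm t N 1) k) := (iInf_tm_lt t N).ne
  obtain ⟨c, hc⟩ : ∃ c : ℕ, (⨅ k, P (tm t N c) k) ≠ σ := by
    by_cases h0 : (⨅ k, P (tm t N 0) k) = σ
    · exact ⟨1, fun h1 => hne (h0.trans h1.symm)⟩
    · exact ⟨0, h0⟩
  -- the modified point is in the basic open set, hence in the interior
  have hmem : tm t N c ∈ (I : Set ℕ).pi u := by
    intro i hi
    have hiN : i < N := by
      have : i ≤ I.sup id := Finset.le_sup (f := id) hi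
      omega
    rw [tm, if_pos hiN]
    exact (hu i hi).2
  have htm : tm t N c ∈ {t : ℕ → Set.Ioo (0 : ℝ) 1 |
      ∀ n, |∑ k ∈ Finset.range n, (P s k - P t k)| ≤ m} :=
    interior_subset (hsub hmem)
  -- contradiction: partial sums are unbounded
  have htend : Tendsto (fun k => P s k - P (tm t N c) k) atTop
      (𝓝 (σ - ⨅ k, P (tm t N c) k)) :=
    (P_tendsto s).sub (P_tendsto (tm t N c))
  exact not_bounded (sub_ne_zero.mpr (Ne.symm hc)) htend m htm

end FClassesMeagreAux

open FClassesMeagreAux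

theorem F_classes_meager (s : ℕ → Set.Ioo (0 : ℝ) 1) :
    IsMeagre {t : ℕ → Set.Ioo (0 : ℝ) 1 |
      ∃ M : ℝ, ∀ n : ℕ,
        |∑ k ∈ Finset.range n,
          ((∏ i ∈ Finset.range (k + 1), (s i : ℝ)) - ∏ i ∈ Finset.range (k + 1), (t i : ℝ))| ≤ M} := by
  have h1 : {t : ℕ → Set.Ioo (0 : ℝ) 1 |
      ∃ M : ℝ, ∀ n : ℕ,
        |∑ k ∈ Finset.range n,
          ((∏ i ∈ Finset.range (k + 1), (s i : ℝ)) - ∏ i ∈ Finset.range (k + 1), (t i : ℝ))| ≤ M}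
      ⊆ ⋃ m : ℕ, {t : ℕ → Set.Ioo (0 : ℝ) 1 |
        ∀ n, |∑ k ∈ Finset.range n, (P s k - P t k)| ≤ (m : ℝ)} := by
    rintro t ⟨M, hM⟩
    refine Set.mem_iUnion.2 ⟨⌈M⌉₊, fun n => le_trans ?_ (Nat.le_ceil M)⟩
    simpa [P] using hM n
  refine IsMeagre.mono h1 (isMeagre_iUnion fun m => ?_)
  set K := {t : ℕ → Set.Ioo (0 : ℝ) 1 |
    ∀ n, |∑ k ∈ Finset.range n, (P s k - P t k)| ≤ (m : ℝ)} with hK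
  have hcl : IsClosed K := by
    have : K = ⋂ n : ℕ, {t : ℕ → Set.Ioo (0 : ℝ) 1 |
        |∑ k ∈ Finset.range n, (P s k - P t k)| ≤ (m : ℝ)} := by
      ext t; simp [hK, Set.mem_iInter]
    rw [this]
    refine isClosed_iInter fun n => ?_
    have hcont : Continuous fun t : ℕ → Set.Ioo (0 : ℝ) 1 =>
        |∑ k ∈ Finset.range n, (P s k - P t k)| := by
      apply Continuous.abs
      apply continuous_finset_sum
      intro k _
      apply Continuous.sub continuous_const
      simp only [P]
      exact continuous_finset_prod _ fun i _ =>
        continuous_subtype_val.comp (continuous_apply i)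
    exact isClosed_le hcont continuous_const
  have hint : interior K = ∅ := interior_K_empty s (m : ℝ)
  rw [IsMeagre]
  exact residual_of_dense_open hcl.isOpen_compl
    (interior_eq_empty_iff_dense_compl.mp hint)
end

section
/- For s ∈ (0,1)^ℕ with ∏_{i≤k} s_i → 0 as k → ∞, and for any m ∈ ℕ, the set K_m = {t ∈ (0,1)^ℕ : ∀n, |∑_{k<n}(∏_{i≤k} s_i − ∏_{i≤k} t_i)| ≤ m} is nowhere dense in (0,1)^ℕ. -/
open Finset Filter

private lemma prod_one_sub_ge (F : Finset ℕ) (f : ℕ → ℝ) (h0 : ∀ i, 0 ≤ f i)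
    (h1 : ∀ i, f i ≤ 1) : 1 - ∑ i ∈ F, f i ≤ ∏ i ∈ F, (1 - f i) := by
  induction F using Finset.cons_induction with
  | empty => simp
  | cons a F ha ih =>
    rw [Finset.prod_cons, Finset.sum_cons]
    have hp : (0:ℝ) ≤ ∏ i ∈ F, (1 - f i) := Finset.prod_nonneg fun i _ => by linarith [h1 i]
    have hS : (0:ℝ) ≤ ∑ i ∈ F, f i := Finset.sum_nonneg fun i _ => h0 i
    nlinarith [h0 a, h1 a]

private lemma quarter_sum (M : ℕ) : ∑ i ∈ Finset.range M, (1/4:ℝ)^(i+1) ≤ 1/3 := by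
  have : ∑ i ∈ Finset.range M, (1/4:ℝ)^(i+1) = 1/3 * (1 - (1/4)^M) := by
    induction M with
    | zero => simp
    | succ M ih => rw [Finset.sum_range_succ, ih]; ring
  rw [this]
  have : (0:ℝ) ≤ (1/4)^M := by positivity
  linarith

theorem Km_nowhere_dense (s : ℕ → Set.Ioo (0 : ℝ) 1)
    (hs : Tendsto (fun k => ∏ i ∈ Finset.range (k + 1), (s i : ℝ)) atTop (nhds 0))
    (m : ℕ) :
    IsNowhereDense {t : ℕ → Set.Ioo (0 : ℝ) 1 |
      ∀ n : ℕ,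
        |∑ k ∈ Finset.range n,
          ((∏ i ∈ Finset.range (k + 1), (s i : ℝ)) - ∏ i ∈ Finset.range (k + 1), (t i : ℝ))| ≤ m} := by
  set K : Set (ℕ → Set.Ioo (0:ℝ) 1) := {t : ℕ → Set.Ioo (0 : ℝ) 1 |
      ∀ n : ℕ,
        |∑ k ∈ Finset.range n,
          ((∏ i ∈ Finset.range (k + 1), (s i : ℝ)) - ∏ i ∈ Finset.range (k + 1), (t i : ℝ))| ≤ m}
    with hK
  have hclosed : IsClosed K := by
    have : K = ⋂ n : ℕ, {t : ℕ → Set.Ioo (0:ℝ) 1 |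
        |∑ k ∈ Finset.range n,
          ((∏ i ∈ Finset.range (k + 1), (s i : ℝ)) - ∏ i ∈ Finset.range (k + 1), (t i : ℝ))| ≤ m} := by
      ext t; simp [hK, Set.mem_iInter]
    rw [this]
    refine isClosed_iInter fun n => ?_
    have hc : Continuous fun t : ℕ → Set.Ioo (0:ℝ) 1 =>
        |∑ k ∈ Finset.range n,
          ((∏ i ∈ Finset.range (k + 1), (s i : ℝ)) - ∏ i ∈ Finset.range (k + 1), (t i : ℝ))| := by
      apply Continuous.abs
      apply continuous_finset_sum
      intro k _
      apply Continuous.sub continuous_const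
      apply continuous_finset_prod
      intro i _
      exact continuous_subtype_val.comp (continuous_apply i)
    exact isClosed_le hc continuous_const
  rw [IsNowhereDense, hclosed.closure_eq]
  rw [Set.eq_empty_iff_forall_notMem]
  intro t0 ht0
  obtain ⟨I, u, hu, hsub⟩ := isOpen_pi_iff.mp isOpen_interior t0 ht0
  -- the perturbed point
  have hmem : ∀ i : ℕ, (1 - (1/4:ℝ)^(i+1)) ∈ Set.Ioo (0:ℝ) 1 := by
    intro i
    constructor
    · have h2 : (1/4:ℝ)^(i+1) ≤ 1/4 := by
        rw [pow_succ]
        have h3 : (1/4:ℝ)^i ≤ 1 := pow_le_one₀ (by norm_num) (by norm_num)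
        nlinarith
      linarith
    · have : (0:ℝ) < (1/4)^(i+1) := by positivity
      linarith
  set t : ℕ → Set.Ioo (0:ℝ) 1 := fun i => if i ∈ I then t0 i else ⟨_, hmem i⟩ with ht
  have htpi : t ∈ (↑I : Set ℕ).pi u := by
    intro i hi
    simp only [ht, Set.mem_setOf_eq]
    rw [if_pos (Finset.mem_coe.mp hi)]
    exact (hu i hi).2
  have htK : t ∈ K := interior_subset (hsub htpi)
  -- lower bound on products of t
  set P : ℝ := ∏ i ∈ I, (t0 i : ℝ) with hP
  have hPpos : 0 < P := Finset.prod_pos fun i _ => (t0 i).2.1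
  set c : ℝ := P * (2/3) with hc
  have hcpos : 0 < c := by positivity
  have hprod : ∀ k : ℕ, c ≤ ∏ i ∈ Finset.range (k+1), (t i : ℝ) := by
    intro k
    have hsplit : ∏ i ∈ Finset.range (k+1), (t i : ℝ)
        = (∏ i ∈ Finset.range (k+1) ∩ I, (t0 i : ℝ)) *
          ∏ i ∈ Finset.range (k+1) \ I, (1 - (1/4:ℝ)^(i+1)) := by
      rw [← Finset.prod_inter_mul_prod_diff (Finset.range (k+1)) I]
      congr 1
      · apply Finset.prod_congr rfl
        intro i hi
        simp only [ht]
        rw [if_pos (Finset.mem_inter.mp hi).2]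
      · apply Finset.prod_congr rfl
        intro i hi
        simp only [ht]
        rw [if_neg (Finset.mem_sdiff.mp hi).2]
    rw [hsplit]
    have h1 : P ≤ ∏ i ∈ Finset.range (k+1) ∩ I, (t0 i : ℝ) := by
      rw [hP, ← Finset.prod_inter_mul_prod_diff I (Finset.range (k+1))]
      rw [Finset.inter_comm I (Finset.range (k+1))]
      have hle1 : ∏ i ∈ I \ Finset.range (k+1), (t0 i : ℝ) ≤ 1 :=
        Finset.prod_le_one (fun i _ => le_of_lt (t0 i).2.1) (fun i _ => le_of_lt (t0 i).2.2)
      have hpos2 : 0 < ∏ i ∈ Finset.range (k+1) ∩ I, (t0 i : ℝ) :=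
        Finset.prod_pos fun i _ => (t0 i).2.1
      nlinarith
    have h2 : (2/3:ℝ) ≤ ∏ i ∈ Finset.range (k+1) \ I, (1 - (1/4:ℝ)^(i+1)) := by
      have hge := prod_one_sub_ge (Finset.range (k+1) \ I) (fun i => (1/4:ℝ)^(i+1))
        (fun i => by positivity) (fun i => le_of_lt (by have h := (hmem i).1; linarith))
      have hsum : ∑ i ∈ Finset.range (k+1) \ I, (1/4:ℝ)^(i+1) ≤ 1/3 := by
        calc ∑ i ∈ Finset.range (k+1) \ I, (1/4:ℝ)^(i+1)
            ≤ ∑ i ∈ Finset.range (k+1), (1/4:ℝ)^(i+1) :=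
              Finset.sum_le_sum_of_subset_of_nonneg (Finset.sdiff_subset)
                (fun i _ _ => by positivity)
          _ ≤ 1/3 := quarter_sum (k+1)
      linarith
    calc c = P * (2/3) := hc
      _ ≤ (∏ i ∈ Finset.range (k+1) ∩ I, (t0 i : ℝ)) *
          ∏ i ∈ Finset.range (k+1) \ I, (1 - (1/4:ℝ)^(i+1)) := by
          have hpos2 : 0 < ∏ i ∈ Finset.range (k+1) ∩ I, (t0 i : ℝ) :=
            Finset.prod_pos fun i _ => (t0 i).2.1
          nlinarith
  -- eventually products of s are small
  have hev : ∀ᶠ k in atTop, (∏ i ∈ Finset.range (k+1), (s i : ℝ)) < c/2 :=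
    hs.eventually (gt_mem_nhds (by positivity))
  obtain ⟨N, hN⟩ := eventually_atTop.mp hev
  -- choose n large
  set a : ℕ → ℝ := fun k =>
    (∏ i ∈ Finset.range (k + 1), (s i : ℝ)) - ∏ i ∈ Finset.range (k + 1), (t i : ℝ) with ha
  have haneg : ∀ k, N ≤ k → a k ≤ -(c/2) := by
    intro k hk
    have := hN k hk
    have := hprod k
    simp only [ha]
    linarith
  set S : ℝ := ∑ k ∈ Finset.range N, a k with hS
  obtain ⟨j, hj⟩ := exists_nat_gt ((S + m) / (c/2))
  have hjval : S + m < j * (c/2) := by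
    rw [div_lt_iff₀ (by positivity)] at hj
    linarith
  have hbound := htK (N + j)
  have hsplit : ∑ k ∈ Finset.range (N + j), a k = S + ∑ k ∈ Finset.Ico N (N + j), a k := by
    rw [hS, Finset.range_eq_Ico, Finset.range_eq_Ico]
    exact (Finset.sum_Ico_consecutive a (Nat.zero_le N) (Nat.le_add_right N j)).symm
  have hIco : ∑ k ∈ Finset.Ico N (N + j), a k ≤ j * (-(c/2)) := by
    have := Finset.sum_le_card_nsmul (Finset.Ico N (N + j)) a (-(c/2))
      (fun k hk => haneg k (Finset.mem_Ico.mp hk).1)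
    rw [Nat.card_Ico] at this
    simpa [nsmul_eq_mul, mul_comm] using this
  have : ∑ k ∈ Finset.range (N + j), a k < -(m:ℝ) := by
    rw [hsplit]
    have : j * (-(c/2)) = -(j * (c/2)) := by ring
    rw [this] at hIco
    linarith
  have habs := abs_le.mp hbound
  linarith [habs.1]
end

section
/- The set of s ∈ (0,1)^ℕ such that the series ∑_{n} exp(−∑_{k<n} ∏_{i≤k} s_i) diverges is a dense G_δ subset of (0,1)^ℕ with the product topology. -/
open Finset

theorem divergence_set_dense_Gdelta :
    Dense {s : ℕ → Set.Ioo (0 : ℝ) 1 |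
        ¬ Summable (fun n => Real.exp (-∑ k ∈ Finset.range n, ∏ i ∈ Finset.range (k + 1), (s i : ℝ)))} ∧
    IsGδ {s : ℕ → Set.Ioo (0 : ℝ) 1 |
        ¬ Summable (fun n => Real.exp (-∑ k ∈ Finset.range n, ∏ i ∈ Finset.range (k + 1), (s i : ℝ)))} := by
  constructor
  · -- Density
    rw [dense_iff_inter_open]
    rintro U hU ⟨x, hx⟩
    obtain ⟨I, u, hI, hsub⟩ := isOpen_pi_iff.1 hU x hx
    set N := I.sup id + 1 with hN
    have half : (1 / 2 : ℝ) ∈ Set.Ioo (0 : ℝ) 1 := by norm_num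
    set t : ℕ → Set.Ioo (0 : ℝ) 1 := fun i => if i ∈ I then x i else ⟨1 / 2, half⟩ with ht
    refine ⟨t, hsub ?_, ?_⟩
    · intro i hi
      simp only [ht]
      rw [if_pos (Finset.mem_coe.1 hi)]
      exact (hI i (Finset.mem_coe.1 hi)).2
    · -- not summable at t
      have hub : ∀ i, (t i : ℝ) ≤ 1 := fun i => le_of_lt (t i).2.2
      have hpos : ∀ i, (0 : ℝ) ≤ (t i : ℝ) := fun i => le_of_lt (t i).2.1
      have hhalf : ∀ i, N ≤ i → (t i : ℝ) = 1 / 2 := by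
        intro i hi
        have hiI : i ∉ I := by
          intro h
          have := Finset.le_sup (f := id) h
          simp only [id] at this
          omega
        simp [ht, hiI]
      have key : ∀ k, ∏ i ∈ range (k + 1), (t i : ℝ) ≤ 2 ^ N * (1 / 2) ^ k := by
        intro k
        rcases le_or_gt (k + 1) N with h | h
        · calc ∏ i ∈ range (k + 1), (t i : ℝ)
              ≤ ∏ i ∈ range (k + 1), 1 :=
                Finset.prod_le_prod (fun i _ => hpos i) (fun i _ => hub i)
            _ = 1 := by simp
            _ ≤ 2 ^ N * (1 / 2) ^ k := by
                rw [one_div, inv_pow, ← div_eq_mul_inv, le_div_iff₀ (by positivity), one_mul]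
                exact pow_le_pow_right₀ (by norm_num) (by omega)
        · have hNk : N ≤ k + 1 := by omega
          have hsplit : ∏ i ∈ range (k + 1), (t i : ℝ)
              = (∏ i ∈ Finset.Ico 0 N, (t i : ℝ)) * ∏ i ∈ Finset.Ico N (k + 1), (t i : ℝ) := by
            rw [Finset.range_eq_Ico, ← Finset.prod_Ico_consecutive _ (Nat.zero_le N) hNk]
          have h1 : ∏ i ∈ Finset.Ico 0 N, (t i : ℝ) ≤ 1 :=
            Finset.prod_le_one (fun i _ => hpos i) (fun i _ => hub i)
          have h2 : ∏ i ∈ Finset.Ico N (k + 1), (t i : ℝ) = (1 / 2) ^ (k + 1 - N) := by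
            rw [Finset.prod_congr rfl (fun i hi => hhalf i (Finset.mem_Ico.1 hi).1),
              Finset.prod_const, Nat.card_Ico]
          have h3 : ((1 : ℝ) / 2) ^ (k + 1 - N) ≤ 2 ^ N * (1 / 2) ^ k := by
            have e1 : ((1 : ℝ) / 2) ^ (k + 1 - N) = 1 / 2 ^ (k + 1 - N) := by
              rw [div_pow, one_pow]
            have e2 : (2 : ℝ) ^ N * (1 / 2) ^ k = 2 ^ N / 2 ^ k := by
              rw [div_pow, one_pow, mul_one_div]
            rw [e1, e2, div_le_div_iff₀ (by positivity) (by positivity), one_mul, ← pow_add]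
            have hEq : N + (k + 1 - N) = k + 1 := by omega
            rw [hEq]
            exact pow_le_pow_right₀ (by norm_num) (by omega)
          calc ∏ i ∈ range (k + 1), (t i : ℝ)
              = (∏ i ∈ Finset.Ico 0 N, (t i : ℝ)) * ∏ i ∈ Finset.Ico N (k + 1), (t i : ℝ) := hsplit
            _ ≤ 1 * ∏ i ∈ Finset.Ico N (k + 1), (t i : ℝ) := by
                refine mul_le_mul_of_nonneg_right h1 ?_
                exact Finset.prod_nonneg (fun i _ => hpos i)
            _ = (1 / 2) ^ (k + 1 - N) := by rw [one_mul, h2]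
            _ ≤ 2 ^ N * (1 / 2) ^ k := h3
      have Sbound : ∀ n, ∑ k ∈ range n, ∏ i ∈ range (k + 1), (t i : ℝ) ≤ 2 ^ N * 2 := by
        intro n
        calc ∑ k ∈ range n, ∏ i ∈ range (k + 1), (t i : ℝ)
            ≤ ∑ k ∈ range n, 2 ^ N * (1 / 2) ^ k := Finset.sum_le_sum (fun k _ => key k)
          _ = 2 ^ N * ∑ k ∈ range n, (1 / 2) ^ k := by rw [Finset.mul_sum]
          _ ≤ 2 ^ N * 2 :=
              mul_le_mul_of_nonneg_left (sum_geometric_two_le n) (by positivity)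
      intro hsum
      have h0 := hsum.tendsto_atTop_zero
      have hε : (0 : ℝ) < Real.exp (-(2 ^ N * 2)) := Real.exp_pos _
      have hev := h0.eventually (gt_mem_nhds hε)
      obtain ⟨n, hn⟩ := hev.exists
      have hge : Real.exp (-(2 ^ N * 2))
          ≤ Real.exp (-∑ k ∈ range n, ∏ i ∈ range (k + 1), (t i : ℝ)) := by
        apply Real.exp_le_exp.2
        linarith [Sbound n]
      linarith
  · -- Gδ
    have hset : {s : ℕ → Set.Ioo (0 : ℝ) 1 |
        ¬ Summable (fun n => Real.exp (-∑ k ∈ Finset.range n, ∏ i ∈ Finset.range (k + 1), (s i : ℝ)))}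
        = ⋂ (M : ℕ), ⋃ (n : ℕ), {s : ℕ → Set.Ioo (0 : ℝ) 1 |
            (M : ℝ) < ∑ j ∈ range n,
              Real.exp (-∑ k ∈ range j, ∏ i ∈ range (k + 1), (s i : ℝ))} := by
      ext s
      simp only [Set.mem_setOf_eq, Set.mem_iInter, Set.mem_iUnion]
      constructor
      · intro hns M
        by_contra h
        push_neg at h
        exact hns (summable_of_sum_range_le (fun n => (Real.exp_pos _).le) h)
      · intro h hs
        obtain ⟨n, hn⟩ := h ⌈(∑' m, Real.exp
            (-∑ k ∈ range m, ∏ i ∈ range (k + 1), (s i : ℝ)))⌉₊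
        have h1 : ∑ j ∈ range n, Real.exp (-∑ k ∈ range j, ∏ i ∈ range (k + 1), (s i : ℝ))
            ≤ ∑' m, Real.exp (-∑ k ∈ range m, ∏ i ∈ range (k + 1), (s i : ℝ)) :=
          Summable.sum_le_tsum (range n) (fun i _ => (Real.exp_pos _).le) hs
        have h2 := Nat.le_ceil (∑' m, Real.exp
            (-∑ k ∈ range m, ∏ i ∈ range (k + 1), (s i : ℝ)))
        linarith
    rw [hset]
    refine IsGδ.iInter fun M => IsOpen.isGδ ?_
    refine isOpen_iUnion fun n => ?_
    have hc : Continuous fun s : ℕ → Set.Ioo (0 : ℝ) 1 =>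
        ∑ j ∈ range n, Real.exp (-∑ k ∈ range j, ∏ i ∈ range (k + 1), (s i : ℝ)) := by
      refine continuous_finset_sum _ fun j _ => ?_
      exact Real.continuous_exp.comp ((continuous_finset_sum _ fun k _ =>
        continuous_finset_prod _ fun i _ =>
          continuous_subtype_val.comp (continuous_apply i)).neg)
    exact isOpen_lt continuous_const hc
end

section
/- If (a_n) is a sequence in (0,1] with a_0 = 1 such that (a_n/a_{n+1}) is nonincreasing (log-convexity), then there exists a sequence (b_n)_{n≥1} of non-negative real numbers such that the formal power series identity ∑_{n≥0} a_n t^n = 1/(1 − ∑_{n≥1} b_n t^n) holds, i.e., the coefficients b_n defined recursively by a_n = ∑_{k=1}^{n} b_k a_{n−k} for n ≥ 1 are all non-negative. -/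
open Finset

noncomputable def kaluzaB (a : ℕ → ℝ) (n : ℕ) : ℝ :=
  a n - ∑ k ∈ (Finset.Icc 1 (n - 1)).attach, kaluzaB a k.1 * a (n - k.1)
decreasing_by
  have h := k.2
  simp only [Finset.mem_Icc] at h
  omega

lemma kaluzaB_eq (a : ℕ → ℝ) (n : ℕ) :
    kaluzaB a n = a n - ∑ k ∈ Finset.Icc 1 (n - 1), kaluzaB a k * a (n - k) := by
  rw [kaluzaB]
  congr 1
  exact Finset.sum_attach _ fun k => kaluzaB a k * a (n - k)

lemma kaluzaB_identity (a : ℕ → ℝ) (ha0 : a 0 = 1) (n : ℕ) (hn : 1 ≤ n) :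
    a n = ∑ k ∈ Finset.Icc 1 n, kaluzaB a k * a (n - k) := by
  obtain ⟨m, rfl⟩ : ∃ m, n = m + 1 := ⟨n - 1, by omega⟩
  rw [Finset.sum_Icc_succ_top (by omega : 1 ≤ m + 1), kaluzaB_eq]
  simp [ha0]

/-- A log-convex sequence `a` in `(0,1]` with `a 0 = 1` admits non-negative
coefficients `b` with `∑ aₙ tⁿ = 1 / (1 - ∑ bₙ tⁿ)`, i.e. the coefficients defined
by the recursion `aₙ = ∑_{k=1}^n b_k a_{n-k}` are non-negative. -/
theorem log_convex_NP_coefficients (a : ℕ → ℝ)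
    (ha0 : a 0 = 1) (hpos : ∀ n, 0 < a n) (hle : ∀ n, a n ≤ 1)
    (hlogconvex : Antitone (fun n => a n / a (n + 1))) :
    ∃ b : ℕ → ℝ,
      (∀ n : ℕ, 1 ≤ n → a n = ∑ k ∈ Finset.Icc 1 n, b k * a (n - k)) ∧
      (∀ n : ℕ, 1 ≤ n → 0 ≤ b n) := by
  refine ⟨kaluzaB a, fun n hn => kaluzaB_identity a ha0 n hn, ?_⟩
  intro n
  induction n using Nat.strong_induction_on with
  | _ n ih =>
    intro hn
    obtain ⟨m, rfl⟩ : ∃ m, n = m + 1 := ⟨n - 1, by omega⟩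
    rcases Nat.eq_zero_or_pos m with rfl | hm
    · rw [kaluzaB_eq]
      simp
      exact (hpos 1).le
    · rw [kaluzaB_eq]
      simp only [Nat.add_sub_cancel]
      have hsum : ∑ k ∈ Finset.Icc 1 m, kaluzaB a k * a (m + 1 - k) ≤ a (m + 1) := by
        have hmid : a (m + 1) =
            ∑ k ∈ Finset.Icc 1 m, kaluzaB a k * (a (m - k) * (a (m + 1) / a m)) := by
          calc a (m + 1)
              = (∑ k ∈ Finset.Icc 1 m, kaluzaB a k * a (m - k)) * (a (m + 1) / a m) := by
                rw [← kaluzaB_identity a ha0 m hm]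
                field_simp
                rw [mul_div_assoc, div_self (hpos m).ne', mul_one]
            _ = _ := by
                rw [Finset.sum_mul]
                exact Finset.sum_congr rfl fun k _ => by ring
        rw [hmid]
        apply Finset.sum_le_sum
        intro k hk
        simp only [Finset.mem_Icc] at hk
        have hknn : 0 ≤ kaluzaB a k := ih k (by omega) hk.1
        apply mul_le_mul_of_nonneg_left _ hknn
        have h1 : m + 1 - k = (m - k) + 1 := by omega
        rw [h1]
        have h2 := hlogconvex (show m - k ≤ m by omega)
        simp only at h2
        rw [div_le_div_iff₀ (hpos _) (hpos _)] at h2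
        rw [mul_div_assoc', le_div_iff₀ (hpos m)]
        nlinarith [h2]
      linarith
end
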